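/- Localization identities for the (n,n) quantum secret sharing code on the star graph (Proposition 7): let n ≥ 2, let S_n be the star graph on {1,…,n} with centre 1, and for α, β ∈ ℂ let |S_g⟩ := α|G_{(0,0,…,0)}⟩ + β|G_{(1,0,…,0)}⟩ ∈ H_n. Then, up to the canonical reordering of tensor factors: (i) |S_g⟩ = 2^{−(n−1)/2} ∑_{m ∈ {0,1}^{n−1}} |m⟩_{2,…,n} ⊗ Z^{m_2⊕⋯⊕m_n}(α|+⟩ + β|−⟩)_1, where |±⟩ := (|0⟩ ± |1⟩)/√2; and (ii) for every leaf i ∈ {2,…,n}, |S_g⟩ = 2^{−1/2}( |h_{(0,0,…,0)}⟩ ⊗ (α|0⟩ + β|1⟩)_i + |h_{(1,0,…,0)}⟩ ⊗ (β|0⟩ + α|1⟩)_i ), where h is the star graph on {1,…,n}∖{i} with centre 1 and the label 1 sits on vertex 1. Hence measuring the other players' qubits in the Z basis (for (i)) or the stated bases (for (ii)) localizes the quantum secret α|0⟩+β|1⟩ onto a single chosen player up to a known local correction. -/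

import Mathlib

noncomputable section

open scoped ComplexConjugate

/-- The Hilbert space of qubits indexed by `V`, as functions from bit strings to `ℂ`. -/
abbrev QState (V : Type) : Type := (V → Fin 2) → ℂ

/-- The diagonal operator with diagonal entries `d`. -/
def diagOp {V : Type} (d : (V → Fin 2) → ℂ) : QState V →ₗ[ℂ] QState V where
  toFun f := fun x => d x * f x
  map_add' f g := by funext x; simp [mul_add]
  map_smul' c f := by funext x; simp [smul_eq_mul]; ring

/-- The Pauli `Z` operator on qubit `i`. -/
def Zop {V : Type} (i : V) : QState V →ₗ[ℂ] QState V :=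
  diagOp fun x => (-1 : ℂ) ^ (x i : ℕ)

/-- The Pauli `X` operator on qubit `i` (bit flip). -/
def Xop {V : Type} [DecidableEq V] (i : V) : QState V →ₗ[ℂ] QState V where
  toFun f := fun x => f (Function.update x i (x i + 1))
  map_add' f g := rfl
  map_smul' c f := rfl

/-- The phase gate `S` on qubit `i`, sending `|x⟩` to `(-i)^(x i) |x⟩`. -/
def Sop {V : Type} (i : V) : QState V →ₗ[ℂ] QState V :=
  diagOp fun x => (-Complex.I) ^ (x i : ℕ)

/-- The Pauli `Y` operator on qubit `i`, `Y = i·X·Z`. -/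
def Yop {V : Type} [DecidableEq V] (i : V) : QState V →ₗ[ℂ] QState V :=
  Complex.I • (Xop i ∘ₗ Zop i)

/-- `qVal G x` is the number of edges of `G` both of whose endpoints carry bit 1 in `x`. -/
def qVal {V : Type} (G : SimpleGraph V) (x : V → Fin 2) : ℕ :=
  Nat.card {e : Sym2 V // e ∈ G.edgeSet ∧ ∀ v ∈ e, x v = 1}

/-- The graph state `|G⟩`, with amplitudes `2^{-n/2} (-1)^{q_G(x)}`. -/
def graphState {V : Type} [Fintype V] (G : SimpleGraph V) : QState V :=
  fun x => (((Real.sqrt 2)⁻¹ ^ Fintype.card V : ℝ) : ℂ) * (-1 : ℂ) ^ qVal G x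

/-- The labeled/encoded graph state `|𝒢_ℓ⟩ = (∏_i Z_i^{ℓ_i}) (∏_{j ∈ Vsq} S_j) |G⟩`,
with square-vertex set `Vsq`. -/
def encSq {V : Type} [Fintype V] (G : SimpleGraph V) (Vsq : Set V) (ℓ : V → Fin 2) : QState V :=
  fun x => (-1 : ℂ) ^ Nat.card {i : V // ℓ i = 1 ∧ x i = 1}
    * (-Complex.I) ^ Nat.card {j : V // j ∈ Vsq ∧ x j = 1}
    * graphState G x

/-- The encoded graph state `|G_ℓ⟩` (no square vertices). -/
def encG {V : Type} [Fintype V] (G : SimpleGraph V) (ℓ : V → Fin 2) : QState V :=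
  encSq G ∅ ℓ

open Classical in
/-- The stabilizer operator of vertex `i`: `X_i ∏_{j ∈ N_i} Z_j` for circular vertices,
`Y_i ∏_{j ∈ N_i} Z_j` for square vertices (`i ∈ Vsq`). -/
def Kop {V : Type} [DecidableEq V] (G : SimpleGraph V) (Vsq : Set V) (i : V) :
    QState V →ₗ[ℂ] QState V :=
  (if i ∈ Vsq then Yop i else Xop i) ∘ₗ
    diagOp fun x => (-1 : ℂ) ^ Nat.card {j : V // G.Adj i j ∧ x j = 1}

/-- Merge a bit string on `P` with a bit string on the complement of `P`. -/
def mergeBits {V : Type} [DecidableEq V] (P : Finset V) (a : {i // i ∈ P} → Fin 2)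
    (c : {i // i ∉ P} → Fin 2) : V → Fin 2 :=
  fun i => if h : i ∈ P then a ⟨i, h⟩ else c ⟨i, h⟩

/-- The reduced density matrix of the pure state `ψ` on the qubits in `P`:
`(a, b) ↦ ∑_c ⟨a⊔c|ψ⟩⟨ψ|b⊔c⟩`. -/
def red {V : Type} [Fintype V] [DecidableEq V] (P : Finset V) (ψ : QState V) :
    ({i // i ∈ P} → Fin 2) → ({i // i ∈ P} → Fin 2) → ℂ :=
  fun a b => ∑ c : {i // i ∉ P} → Fin 2, ψ (mergeBits P a c) * conj (ψ (mergeBits P b c))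

/-- The computational basis vector `|y⟩`. -/
def basisVec {V : Type} [Fintype V] [DecidableEq V] (y : V → Fin 2) : QState V :=
  fun x => if x = y then 1 else 0

/-- The matrix entry `⟨x|A|y⟩` of an operator. -/
def opEntry {V : Type} [Fintype V] [DecidableEq V] (A : QState V →ₗ[ℂ] QState V)
    (x y : V → Fin 2) : ℂ := A (basisVec y) x

/-- `A` acts trivially outside `P`: it equals `M ⊗ Id` for some operator `M` on the
qubits in `P`. -/
def trivialOutside {V : Type} [Fintype V] [DecidableEq V] (P : Finset V)
    (A : QState V →ₗ[ℂ] QState V) : Prop :=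
  ∃ M : ({i // i ∈ P} → Fin 2) → ({i // i ∈ P} → Fin 2) → ℂ,
    ∀ a b c c', opEntry A (mergeBits P a c) (mergeBits P b c') = if c = c' then M a b else 0

/-- The product `∏_{i ∈ T} K_i` of (commuting) operators, taken in sorted order. -/
def prodOps {V : Type} [LinearOrder V] (T : Finset V)
    (K : V → QState V →ₗ[ℂ] QState V) : QState V →ₗ[ℂ] QState V :=
  (T.sort (· ≤ ·)).foldr (fun i acc => K i ∘ₗ acc) LinearMap.id


/-- The star graph (nGHZM graph) on `Fin n` with centre `0`. -/
def starG (n : ℕ) [NeZero n] : SimpleGraph (Fin n) where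
  Adj a b := a ≠ b ∧ (a = 0 ∨ b = 0)
  symm := by constructor; intro a b h; exact ⟨h.1.symm, h.2.symm⟩
  loopless := by constructor; intro a h; exact h.1 rfl

/-- Components of `|+⟩ = (|0⟩+|1⟩)/√2`. -/
def plusC (_ : Fin 2) : ℂ := (((Real.sqrt 2)⁻¹ : ℝ) : ℂ)

/-- Components of `|−⟩ = (|0⟩−|1⟩)/√2`. -/
def minusC (z : Fin 2) : ℂ := (((Real.sqrt 2)⁻¹ : ℝ) : ℂ) * (-1 : ℂ) ^ (z : ℕ)

/-- localization identities for the (n,n) QQ code on the star graph,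
n = m+2 ≥ 2 players, centre 0: for `|S_g⟩ = α|G_{0…0}⟩ + β|G_{10…0}⟩`, stated
pointwise on the computational basis:
(i) `|S_g⟩ = 2^{−(n−1)/2} ∑_m |m⟩_{leaves} ⊗ Z^{⊕ m_j}(α|+⟩ + β|−⟩)_centre`;
(ii) for every leaf `i`,
`|S_g⟩ = 2^{−1/2}(|h_{0…0}⟩ ⊗ (α|0⟩+β|1⟩)_i + |h_{10…0}⟩ ⊗ (β|0⟩+α|1⟩)_i)`,
where `h` is the star on the remaining vertices with centre 0 and the label 1 sits on
the centre. -/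

lemma natCard_empty {I : Type} (p : I → Prop) (h : ∀ i, ¬ p i) :
    Nat.card {i // p i} = 0 :=
  @Nat.card_of_isEmpty _ ⟨fun i => h i.1 i.2⟩

lemma natCard_single {I : Type} (p : I → Prop) (c : I) (h : ∀ i, p i ↔ i = c) :
    Nat.card {i // p i} = 1 :=
  Nat.card_eq_one_iff_unique.mpr
    ⟨⟨fun a b => Subtype.ext (((h a.1).mp a.2).trans (((h b.1).mp b.2)).symm)⟩,
     ⟨⟨c, (h c).mpr rfl⟩⟩⟩

open Finset in
lemma natCard_filter {V : Type} [Fintype V] (p : V → Prop) [DecidablePred p] :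
    Nat.card {i // p i} = (Finset.univ.filter fun i => p i).card := by
  classical
  rw [Nat.card_eq_fintype_card, Fintype.card_subtype]

/-- `qVal` for a star-like graph with centre `c`. -/
lemma qVal_starlike {V : Type} (G : SimpleGraph V) (c : V)
    (hG : ∀ a b, G.Adj a b ↔ a ≠ b ∧ (a = c ∨ b = c)) (x : V → Fin 2) :
    qVal G x = (x c : ℕ) * Nat.card {j // j ≠ c ∧ x j = 1} := by
  have hx2 : x c = 0 ∨ x c = 1 := by omega
  rcases hx2 with h | h
  · rw [h]
    simp only [Fin.val_zero, zero_mul]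
    apply natCard_empty
    rintro e ⟨he, hxe⟩
    induction e using Sym2.ind with
    | _ a b =>
      rw [SimpleGraph.mem_edgeSet, hG] at he
      have hc : x c = 1 := by
        cases he.2 with
        | inl h1 => subst h1; exact hxe a (Sym2.mem_mk_left a b)
        | inr h1 => subst h1; exact hxe b (Sym2.mem_mk_right a b)
      rw [h] at hc; exact absurd hc (by decide)
  · rw [h]
    simp only [Fin.val_one, one_mul]
    unfold qVal
    refine (Nat.card_congr (Equiv.ofBijective
      (fun j => (⟨s(c, j.1), ?_, ?_⟩ :
        {e : Sym2 V // e ∈ G.edgeSet ∧ ∀ v ∈ e, x v = 1})) ⟨?_, ?_⟩)).symm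
    · rw [SimpleGraph.mem_edgeSet, hG]
      exact ⟨Ne.symm j.2.1, Or.inl rfl⟩
    · intro v hv
      rcases Sym2.mem_iff.mp hv with rfl | rfl
      · exact h
      · exact j.2.2
    · rintro ⟨a, ha⟩ ⟨b, hb⟩ hab
      rcases Sym2.eq_iff.mp (Subtype.ext_iff.mp hab) with ⟨-, h2⟩ | ⟨h1, h2⟩
      · exact Subtype.ext h2
      · exact absurd h2 ha.1
    · rintro ⟨e, he, hxe⟩
      induction e using Sym2.ind with
      | _ a b =>
        rw [SimpleGraph.mem_edgeSet, hG] at he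
        obtain ⟨hne, hc⟩ := he
        cases hc with
        | inl h1 =>
          subst h1
          exact ⟨⟨b, Ne.symm hne, hxe b (Sym2.mem_mk_right a b)⟩, rfl⟩
        | inr h1 =>
          subst h1
          exact ⟨⟨a, hne, hxe a (Sym2.mem_mk_left a b)⟩, Subtype.ext Sym2.eq_swap⟩

open Finset in
lemma natCard_bit_split {V : Type} [Fintype V] [DecidableEq V] (x : V → Fin 2)
    (p : V → Prop) [DecidablePred p] (i : V) (hpi : p i) :
    Nat.card {j // p j ∧ x j = 1} =
      Nat.card {j // (p j ∧ j ≠ i) ∧ x j = 1} + (x i : ℕ) := by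
  rw [natCard_filter, natCard_filter]
  have hx2 : x i = 0 ∨ x i = 1 := by omega
  rcases hx2 with h | h
  · rw [h]
    simp only [Fin.val_zero, add_zero]
    apply Finset.card_bij (fun a _ => a) ?_ (fun a b _ _ hab => hab) ?_
    · intro a ha
      simp only [mem_filter, mem_univ, true_and] at ha ⊢
      refine ⟨⟨ha.1, fun hai => ?_⟩, ha.2⟩
      subst hai; rw [h] at ha; exact absurd ha.2 (by decide)
    · intro b hb
      simp only [mem_filter, mem_univ, true_and] at hb
      exact ⟨b, by simp only [mem_filter, mem_univ, true_and]; exact ⟨hb.1.1, hb.2⟩, rfl⟩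
  · rw [h]
    simp only [Fin.val_one]
    have hmem : i ∈ Finset.univ.filter fun j => p j ∧ x j = 1 := by
      simp [hpi, h]
    rw [← Finset.card_erase_add_one hmem]
    have hset : (Finset.univ.filter fun j => (p j ∧ j ≠ i) ∧ x j = 1)
        = (Finset.univ.filter fun j => p j ∧ x j = 1).erase i := by
      ext a
      simp only [mem_filter, mem_univ, true_and, Finset.mem_erase]
      tauto
    rw [hset]

lemma if_label_card {I : Type} (x : I → Fin 2) (c : I) (f : I → Prop) [DecidablePred f]
    (hf : ∀ i, f i ↔ i = c) :
    Nat.card {i : I // (if f i then (1 : Fin 2) else 0) = 1 ∧ x i = 1} =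
      if x c = 1 then 1 else 0 := by
  by_cases h : x c = 1
  · rw [if_pos h]
    apply natCard_single _ c
    intro i
    constructor
    · rintro ⟨h1, -⟩
      by_contra hic
      rw [if_neg (fun hfi => hic ((hf i).mp hfi))] at h1
      exact absurd h1 (by decide)
    · intro hic
      exact ⟨by rw [if_pos ((hf i).mpr hic)], by rw [hic]; exact h⟩
  · rw [if_neg h]
    apply natCard_empty
    rintro i ⟨h1, h2⟩
    by_cases hic : i = c
    · subst hic; exact h h2
    · rw [if_neg (fun hfi => hic ((hf i).mp hfi))] at h1
      exact absurd h1 (by decide)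

theorem star_qq_localization (m : ℕ) (α β : ℂ) :
    (∀ x : Fin (m + 2) → Fin 2,
      (α • encG (starG (m + 2)) (fun _ => 0) +
          β • encG (starG (m + 2)) fun j => if j = 0 then 1 else 0) x =
        (((Real.sqrt 2)⁻¹ ^ (m + 1) : ℝ) : ℂ) *
          ((-1 : ℂ) ^ ((Nat.card {j : Fin (m + 2) // j ≠ 0 ∧ x j = 1} % 2) * (x 0 : ℕ)) *
            (α * plusC (x 0) + β * minusC (x 0)))) ∧
    (∀ i : Fin (m + 2), i ≠ 0 → ∀ x : Fin (m + 2) → Fin 2,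
      (α • encG (starG (m + 2)) (fun _ => 0) +
          β • encG (starG (m + 2)) fun j => if j = 0 then 1 else 0) x =
        (((Real.sqrt 2)⁻¹ : ℝ) : ℂ) *
          (encG ((starG (m + 2)).induce {j | j ≠ i}) (fun _ => 0) (fun j => x j.1) *
              (if x i = 0 then α else β) +
            encG ((starG (m + 2)).induce {j | j ≠ i})
                (fun j => if j.1 = 0 then 1 else 0) (fun j => x j.1) *
              (if x i = 0 then β else α))) := by
  have hG : ∀ a b : Fin (m + 2), (starG (m + 2)).Adj a b ↔ a ≠ b ∧ (a = 0 ∨ b = 0) :=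
    fun a b => Iff.rfl
  constructor
  · intro x
    have hq := qVal_starlike (starG (m + 2)) 0 hG x
    have c0 : Nat.card {i : Fin (m + 2) // (0 : Fin 2) = 1 ∧ x i = 1} = 0 :=
      natCard_empty _ fun i hi => absurd hi.1 (by decide)
    have cE : Nat.card {j : Fin (m + 2) // j ∈ (∅ : Set (Fin (m + 2))) ∧ x j = 1} = 0 :=
      natCard_empty _ fun j hj => hj.1
    have c1 : Nat.card {i : Fin (m + 2) // (if i = 0 then (1 : Fin 2) else 0) = 1 ∧ x i = 1}
        = if x 0 = 1 then 1 else 0 := if_label_card x 0 (fun i => i = 0) fun i => Iff.rfl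
    simp only [Pi.add_apply, Pi.smul_apply, smul_eq_mul, encG, encSq, graphState,
      Fintype.card_fin, hq, c0, cE, c1, pow_zero, one_mul, plusC, minusC]
    have hx0 : x 0 = 0 ∨ x 0 = 1 := by omega
    rcases hx0 with h | h
    · simp only [h, Fin.val_zero, Nat.zero_mul, Nat.mul_zero, pow_zero, one_mul, mul_one,
        if_neg (show ¬ (0 : Fin 2) = 1 by decide)]
      push_cast
      ring
    · simp only [h, Fin.val_one, Nat.one_mul, Nat.mul_one, pow_one, one_mul, mul_one,
        if_pos rfl]
      rw [← neg_one_pow_eq_pow_mod_two]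
      push_cast
      ring
  · intro i hi x
    have hi0 : (0 : Fin (m + 2)) ∈ {j : Fin (m + 2) | j ≠ i} := Ne.symm hi
    set c : {j : Fin (m + 2) // j ∈ {j : Fin (m + 2) | j ≠ i}} := ⟨0, hi0⟩ with hcdef
    have hG' : ∀ a b : {j // j ∈ {j : Fin (m + 2) | j ≠ i}},
        ((starG (m + 2)).induce {j | j ≠ i}).Adj a b ↔ a ≠ b ∧ (a = c ∨ b = c) := by
      intro a b
      show a.1 ≠ b.1 ∧ (a.1 = 0 ∨ b.1 = 0) ↔ _
      constructor
      · rintro ⟨h1, h2⟩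
        exact ⟨fun hab => h1 (congrArg Subtype.val hab),
          h2.imp (fun h => Subtype.ext h) (fun h => Subtype.ext h)⟩
      · rintro ⟨h1, h2⟩
        exact ⟨fun hab => h1 (Subtype.ext hab),
          h2.imp (fun h => congrArg Subtype.val h) (fun h => congrArg Subtype.val h)⟩
    have hq := qVal_starlike (starG (m + 2)) 0 hG x
    have hq' := qVal_starlike ((starG (m + 2)).induce {j | j ≠ i}) c hG' (fun j => x j.1)
    have cEq : Nat.card {j : {j // j ∈ {j : Fin (m + 2) | j ≠ i}} // j ≠ c ∧ x j.1 = 1}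
        = Nat.card {j : Fin (m + 2) // (j ≠ 0 ∧ j ≠ i) ∧ x j = 1} := by
      apply Nat.card_congr
      exact ⟨fun j => ⟨j.1.1, ⟨fun h0 => j.2.1 (Subtype.ext h0), j.1.2⟩, j.2.2⟩,
        fun j => ⟨⟨j.1, j.2.1.2⟩, fun h => j.2.1.1 (congrArg Subtype.val h), j.2.2⟩,
        fun j => rfl, fun j => rfl⟩
    rw [cEq] at hq'
    have hsplit : Nat.card {j : Fin (m + 2) // j ≠ 0 ∧ x j = 1}
        = Nat.card {j : Fin (m + 2) // (j ≠ 0 ∧ j ≠ i) ∧ x j = 1} + (x i : ℕ) :=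
      natCard_bit_split x (fun j => j ≠ 0) i hi
    have c0 : Nat.card {i : Fin (m + 2) // (0 : Fin 2) = 1 ∧ x i = 1} = 0 :=
      natCard_empty _ fun i hi => absurd hi.1 (by decide)
    have cE : Nat.card {j : Fin (m + 2) // j ∈ (∅ : Set (Fin (m + 2))) ∧ x j = 1} = 0 :=
      natCard_empty _ fun j hj => hj.1
    have c1 : Nat.card {i : Fin (m + 2) // (if i = 0 then (1 : Fin 2) else 0) = 1 ∧ x i = 1}
        = if x 0 = 1 then 1 else 0 := if_label_card x 0 (fun i => i = 0) fun i => Iff.rfl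
    have c0' : Nat.card {j : {j // j ∈ {j : Fin (m + 2) | j ≠ i}} //
        (0 : Fin 2) = 1 ∧ x j.1 = 1} = 0 :=
      natCard_empty _ fun j hj => absurd hj.1 (by decide)
    have cE' : Nat.card {j : {j // j ∈ {j : Fin (m + 2) | j ≠ i}} //
        j ∈ (∅ : Set {j // j ∈ {j : Fin (m + 2) | j ≠ i}}) ∧ x j.1 = 1} = 0 :=
      natCard_empty _ fun j hj => hj.1
    have c1' : Nat.card {j : {j // j ∈ {j : Fin (m + 2) | j ≠ i}} //
        (if j.1 = 0 then (1 : Fin 2) else 0) = 1 ∧ x j.1 = 1} = if x 0 = 1 then 1 else 0 :=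
      if_label_card (fun j => x j.1) c (fun j => j.1 = 0)
        fun j => ⟨fun h => Subtype.ext h, fun h => congrArg Subtype.val h⟩
    have hcardV : Fintype.card {j : Fin (m + 2) // j ∈ {j : Fin (m + 2) | j ≠ i}} = m + 1 := by
      rw [← Nat.card_eq_fintype_card, natCard_filter]
      have hset : (Finset.univ.filter fun j : Fin (m + 2) => j ∈ {j : Fin (m + 2) | j ≠ i})
          = Finset.univ.erase i := by
        ext a
        simp [Set.mem_setOf_eq, Finset.mem_erase]
      rw [hset, Finset.card_erase_of_mem (Finset.mem_univ i), Finset.card_univ,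
        Fintype.card_fin]
      omega
    simp only [Pi.add_apply, Pi.smul_apply, smul_eq_mul, encG, encSq, graphState,
      Fintype.card_fin, hcardV, hq, hq', hsplit, c0, cE, c1, c0', cE', c1',
      pow_zero, one_mul]
    have hx0 : x 0 = 0 ∨ x 0 = 1 := by omega
    have hxi : x i = 0 ∨ x i = 1 := by omega
    rcases hx0 with h0 | h0 <;> rcases hxi with h1 | h1 <;>
      simp only [hcdef, h0, h1, Fin.val_zero, Fin.val_one, Nat.zero_mul, Nat.mul_zero, Nat.add_zero,
        pow_zero, pow_one, one_mul, mul_one, Nat.one_mul,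
        if_neg (show ¬ (0 : Fin 2) = 1 by decide), if_pos rfl,
        if_neg (show ¬ (1 : Fin 2) = 0 by decide)] <;>
      push_cast <;> ring

end
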